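/- For every b > 0, the function ψ_b is differentiable at every real τ with sin(bτ/2) ≠ 0, with derivative ψ_b'(τ) = 3 − cos(bτ) − 2bτ·cos(bτ/2)/sin(bτ/2) + (b²τ²/2)/sin²(bτ/2), and this derivative is strictly positive at every such τ. Consequently ψ_b is strictly increasing on each connected component of ℝ \ {2kπ/b : k ∈ ℤ}. -/

import Mathlib

open Real Set

/-- The function `ψ_b(τ) = 3τ − b·τ²·cos(bτ/2)/sin(bτ/2) − sin(bτ)/b`. -/
noncomputable def psi (b τ : ℝ) : ℝ :=
  3 * τ - b * τ ^ 2 * Real.cos (b * τ / 2) / Real.sin (b * τ / 2) - Real.sin (b * τ) / b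

lemma psi_hasDerivAt (b : ℝ) (hb : 0 < b) (τ : ℝ) (hs : Real.sin (b * τ / 2) ≠ 0) :
    HasDerivAt (psi b)
      (3 - Real.cos (b * τ) - 2 * b * τ * Real.cos (b * τ / 2) / Real.sin (b * τ / 2) +
        (b ^ 2 * τ ^ 2 / 2) / Real.sin (b * τ / 2) ^ 2) τ := by
  have hl : HasDerivAt (fun τ : ℝ => b * τ / 2) (b / 2) τ := by
    simpa using ((hasDerivAt_id τ).const_mul b).div_const 2
  have hsin : HasDerivAt (fun τ : ℝ => Real.sin (b * τ / 2))
      (Real.cos (b * τ / 2) * (b / 2)) τ := (Real.hasDerivAt_sin _).comp τ hl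
  have hcos : HasDerivAt (fun τ : ℝ => Real.cos (b * τ / 2))
      (-Real.sin (b * τ / 2) * (b / 2)) τ := (Real.hasDerivAt_cos _).comp τ hl
  have hlb : HasDerivAt (fun τ : ℝ => b * τ) b τ := by
    simpa using (hasDerivAt_id τ).const_mul b
  have hsinb : HasDerivAt (fun τ : ℝ => Real.sin (b * τ) / b)
      (Real.cos (b * τ) * b / b) τ := ((Real.hasDerivAt_sin _).comp τ hlb).div_const b
  have hnum : HasDerivAt (fun τ : ℝ => b * τ ^ 2 * Real.cos (b * τ / 2))
      (b * (2 * τ) * Real.cos (b * τ / 2) + b * τ ^ 2 * (-Real.sin (b * τ / 2) * (b / 2))) τ := by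
    have hp : HasDerivAt (fun τ : ℝ => b * τ ^ 2) (b * (2 * τ)) τ := by
      simpa using ((hasDerivAt_pow 2 τ).const_mul b)
    exact hp.mul hcos
  have hq := hnum.div hsin hs
  have h := ((hasDerivAt_id τ).const_mul 3).sub hq |>.sub hsinb
  refine h.congr_deriv ?_
  have hpyth := Real.sin_sq_add_cos_sq (b * τ / 2)
  symm
  field_simp
  linear_combination (-b^2*τ^2) * hpyth

lemma deriv_pos (b : ℝ) (hb : 0 < b) (τ : ℝ) (hs : Real.sin (b * τ / 2) ≠ 0) :
    0 < 3 - Real.cos (b * τ) - 2 * b * τ * Real.cos (b * τ / 2) / Real.sin (b * τ / 2) +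
        (b ^ 2 * τ ^ 2 / 2) / Real.sin (b * τ / 2) ^ 2 := by
  set s := Real.sin (b * τ / 2) with hsdef
  set c := Real.cos (b * τ / 2) with hcdef
  have hpyth : s ^ 2 + c ^ 2 = 1 := Real.sin_sq_add_cos_sq _
  have hc2 : Real.cos (b * τ) = 1 - 2 * s ^ 2 := by
    rw [show b * τ = 2 * (b * τ / 2) by ring, Real.cos_two_mul, ← hcdef]
    linarith [hpyth]
  have hs2 : 0 < s ^ 2 := by positivity
  have key : (3 - Real.cos (b * τ) - 2 * b * τ * c / s + (b ^ 2 * τ ^ 2 / 2) / s ^ 2) * s ^ 2 =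
      2 * (b * τ / 2 - s * c) ^ 2 + 4 * s ^ 4 := by
    rw [hc2]
    field_simp
    linear_combination (-4 * s ^ 2) * hpyth
  have hpos : 0 < (3 - Real.cos (b * τ) - 2 * b * τ * c / s + (b ^ 2 * τ ^ 2 / 2) / s ^ 2) * s ^ 2 := by
    rw [key]; positivity
  nlinarith [hpos, hs2]

lemma sin_ne_zero_of_mem (b : ℝ) (hb : 0 < b) (k : ℤ) (τ : ℝ)
    (hτ : τ ∈ Set.Ioo (2 * k * Real.pi / b) (2 * (k + 1) * Real.pi / b)) :
    Real.sin (b * τ / 2) ≠ 0 := by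
  obtain ⟨h1, h2⟩ := hτ
  have hπ := Real.pi_pos
  have hlo : (k : ℝ) * Real.pi < b * τ / 2 := by
    rw [div_lt_iff₀ hb] at h1; nlinarith
  have hhi : b * τ / 2 < ((k : ℝ) + 1) * Real.pi := by
    rw [lt_div_iff₀ hb] at h2; nlinarith
  intro h
  rw [Real.sin_eq_zero_iff] at h
  obtain ⟨n, hn⟩ := h
  rw [← hn] at hlo hhi
  have h1' : (k : ℝ) < n := by
    have := (mul_lt_mul_iff_of_pos_right hπ).mp hlo; exact_mod_cast this
  have h2' : (n : ℝ) < k + 1 := by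
    have := (mul_lt_mul_iff_of_pos_right hπ).mp hhi; exact_mod_cast this
  have : (k : ℤ) < n := by exact_mod_cast h1'
  have : (n : ℤ) < k + 1 := by exact_mod_cast h2'
  omega

/-- For every `b > 0`, the function `ψ_b` is differentiable at every
`τ` with `sin(bτ/2) ≠ 0`, with derivative
`ψ_b'(τ) = 3 − cos(bτ) − 2bτ·cos(bτ/2)/sin(bτ/2) + (b²τ²/2)/sin²(bτ/2)`,
this derivative is strictly positive at every such `τ`, and consequently `ψ_b` is
strictly increasing on each connected component of `ℝ \ {2kπ/b : k ∈ ℤ}`, namely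
on each interval `(2kπ/b, 2(k+1)π/b)`, `k ∈ ℤ`. -/
theorem statement5 (b : ℝ) (hb : 0 < b) :
    (∀ τ : ℝ, Real.sin (b * τ / 2) ≠ 0 →
      HasDerivAt (psi b)
        (3 - Real.cos (b * τ) - 2 * b * τ * Real.cos (b * τ / 2) / Real.sin (b * τ / 2) +
          (b ^ 2 * τ ^ 2 / 2) / Real.sin (b * τ / 2) ^ 2) τ) ∧
    (∀ τ : ℝ, Real.sin (b * τ / 2) ≠ 0 →
      0 < 3 - Real.cos (b * τ) - 2 * b * τ * Real.cos (b * τ / 2) / Real.sin (b * τ / 2) +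
          (b ^ 2 * τ ^ 2 / 2) / Real.sin (b * τ / 2) ^ 2) ∧
    (∀ k : ℤ, StrictMonoOn (psi b)
      (Set.Ioo (2 * k * Real.pi / b) (2 * (k + 1) * Real.pi / b))) := by
  refine ⟨fun τ hs => psi_hasDerivAt b hb τ hs, fun τ hs => deriv_pos b hb τ hs, fun k => ?_⟩
  apply strictMonoOn_of_deriv_pos (convex_Ioo _ _)
  · intro x hx
    exact ((psi_hasDerivAt b hb x (sin_ne_zero_of_mem b hb k x hx)).differentiableAt).continuousAt.continuousWithinAt
  · intro x hx
    rw [interior_Ioo] at hx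
    have hne := sin_ne_zero_of_mem b hb k x hx
    rw [(psi_hasDerivAt b hb x hne).deriv]
    exact deriv_pos b hb x hne
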